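/- If f̄_1,...,f̄_k ∈ K[S_M] is a regular sequence, then for each i ≤ k, the homogenization χ^{-1}(f̄_i) is a nonzerodivisor in K[S_M^h]/χ^{-1}(⟨f̄_1,...,f̄_{i-1}⟩). -/

import Mathlib

/-- The affine degree with respect to the generators `g : Fin m → ℤⁿ` of `S_M`. -/
noncomputable def deltaA {n m : ℕ} (g : Fin m → (Fin n → ℤ)) (s : Fin n → ℤ) : ℕ :=
  sInf {d | ∃ f : Fin d → Fin m, ∑ i, g (f i) = s}

/-- The affine semigroup `S_M ⊆ ℤⁿ`. -/
def affSemigroup {n m : ℕ} (g : Fin m → (Fin n → ℤ)) : AddSubmonoid (Fin n → ℤ) :=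
  AddSubmonoid.closure (insert (0 : Fin n → ℤ) {x | ∃ i, x = g i})

/-- The homogenization semigroup `S_M^h ⊆ ℤⁿ × ℤ`. -/
def homSemigroup {n m : ℕ} (g : Fin m → (Fin n → ℤ)) :
    AddSubmonoid ((Fin n → ℤ) × ℤ) :=
  AddSubmonoid.closure (insert ((0 : Fin n → ℤ), (1 : ℤ)) {x | ∃ i, x = (g i, 1)})

/-- The affine degree of a polynomial in `K[S_M]`. -/
noncomputable def affDeg {K : Type*} [Field K] {n m : ℕ} (g : Fin m → (Fin n → ℤ))
    (f : AddMonoidAlgebra K (affSemigroup g)) : ℕ :=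
  f.coeff.support.sup (fun s => deltaA g (s : Fin n → ℤ))

section Aux

/-- degree hom on the homogenized semigroup -/
def hdeg {n m : ℕ} (g : Fin m → (Fin n → ℤ)) : homSemigroup g →+ ℤ :=
  (AddMonoidHom.snd (Fin n → ℤ) ℤ).comp (homSemigroup g).subtype

lemma hdeg_apply {n m : ℕ} (g : Fin m → (Fin n → ℤ)) (x : homSemigroup g) :
    hdeg g x = (x : (Fin n → ℤ) × ℤ).2 := rfl

lemma homSemigroup_mem_struct {n m : ℕ} (g : Fin m → (Fin n → ℤ))
    {x : (Fin n → ℤ) × ℤ} (hx : x ∈ homSemigroup g) :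
    ∃ d : ℕ, x.2 = (d : ℤ) ∧ ∃ e ≤ d, ∃ f : Fin e → Fin m, ∑ i, g (f i) = x.1 := by
  induction hx using AddSubmonoid.closure_induction with
  | mem x hx =>
    rcases hx with rfl | ⟨i, rfl⟩
    · exact ⟨1, rfl, 0, by omega, Fin.elim0, by simp⟩
    · exact ⟨1, rfl, 1, le_refl 1, fun _ => i, by simp⟩
  | zero => exact ⟨0, rfl, 0, le_refl 0, Fin.elim0, by simp⟩
  | add x y hx hy ihx ihy =>
    obtain ⟨d1, h1, e1, he1, f1, hf1⟩ := ihx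
    obtain ⟨d2, h2, e2, he2, f2, hf2⟩ := ihy
    refine ⟨d1 + d2, by simp [Prod.snd_add, h1, h2], e1 + e2, by omega,
      Fin.append f1 f2, ?_⟩
    rw [Fin.sum_univ_add]
    simp [Fin.append_left, Fin.append_right, hf1, hf2]

end Aux

lemma deltaA_le_of_mem {n m : ℕ} (g : Fin m → (Fin n → ℤ))
    {x : (Fin n → ℤ) × ℤ} (hx : x ∈ homSemigroup g) :
    (deltaA g x.1 : ℤ) ≤ x.2 := by
  obtain ⟨d, hd, e, he, f, hf⟩ := homSemigroup_mem_struct g hx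
  have h1 : deltaA g x.1 ≤ e := Nat.sInf_le ⟨f, hf⟩
  rw [hd]
  exact_mod_cast h1.trans he

lemma chi_injOn {K : Type*} [Field K] {n m : ℕ} (g : Fin m → (Fin n → ℤ))
    (χm : homSemigroup g →+ affSemigroup g)
    (hχ : ∀ a : homSemigroup g, ((χm a : Fin n → ℤ)) = (a : (Fin n → ℤ) × ℤ).1)
    (d : ℤ) {b c : AddMonoidAlgebra K (homSemigroup g)}
    (hb : b ∈ AddMonoidAlgebra.gradeBy K (⇑(hdeg g)) d)
    (hc : c ∈ AddMonoidAlgebra.gradeBy K (⇑(hdeg g)) d)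
    (h : AddMonoidAlgebra.mapDomain (⇑χm) b = AddMonoidAlgebra.mapDomain (⇑χm) c) : b = c := by
  have hinj : Set.InjOn (⇑χm) {x : homSemigroup g | hdeg g x = d} := by
    intro x hx y hy hxy
    have h1 : (x : (Fin n → ℤ) × ℤ).1 = (y : (Fin n → ℤ) × ℤ).1 := by
      rw [← hχ x, ← hχ y, hxy]
    have h2 : (x : (Fin n → ℤ) × ℤ).2 = (y : (Fin n → ℤ) × ℤ).2 := by
      rw [← hdeg_apply, ← hdeg_apply, hx, hy]
    exact Subtype.ext (Prod.ext h1 h2)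
  exact AddMonoidAlgebra.coeff_injective (Finsupp.mapDomain_injOn _ hinj
    ((AddMonoidAlgebra.mem_gradeBy_iff _ _ _ b).mp hb)
    ((AddMonoidAlgebra.mem_gradeBy_iff _ _ _ c).mp hc) (congrArg AddMonoidAlgebra.coeff h))

noncomputable abbrev hgrade (K : Type*) [Field K] {n m : ℕ} (g : Fin m → (Fin n → ℤ)) :
    ℤ → Submodule K (AddMonoidAlgebra K (homSemigroup g)) :=
  AddMonoidAlgebra.gradeBy K (⇑(hdeg g))

/-- If `f̄₁,…,f̄_k ∈ K[S_M]` is a regular sequence (each element a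
nonzerodivisor modulo the ideal of the previous ones), then for each `i ≤ k`
the homogenization `χ⁻¹(f̄_i)` is a nonzerodivisor in
`K[S_M^h] / χ⁻¹(⟨f̄₁,…,f̄_{i-1}⟩)`, where `χ⁻¹(J)` denotes the ideal generated
by the homogenizations of all the elements of `J`.  The homogenization `H` is
characterized by `χ(H f) = f` and homogeneity of `H f` in degree `δ^A(f)`. -/
theorem homogenization_nonzerodivisor {K : Type*} [Field K] {n m k : ℕ}
    (g : Fin m → (Fin n → ℤ))
    (χm : homSemigroup g →+ affSemigroup g)
    (hχ : ∀ a : homSemigroup g,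
      ((χm a : Fin n → ℤ)) = (a : (Fin n → ℤ) × ℤ).1)
    (H : AddMonoidAlgebra K (affSemigroup g) → AddMonoidAlgebra K (homSemigroup g))
    (hH : ∀ f, AddMonoidAlgebra.mapDomainRingHom K χm (H f) = f ∧
      ∀ a ∈ (H f).coeff.support, (a : (Fin n → ℤ) × ℤ).2 = (affDeg g f : ℤ))
    (fbar : Fin k → AddMonoidAlgebra K (affSemigroup g))
    (hreg : ∀ i : Fin k, ∀ a : AddMonoidAlgebra K (affSemigroup g),
      a * fbar i ∈ Ideal.span (fbar '' {j | j < i}) →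
      a ∈ Ideal.span (fbar '' {j | j < i})) :
    ∀ i : Fin k, ∀ a : AddMonoidAlgebra K (homSemigroup g),
      a * H (fbar i) ∈
        Ideal.span (H '' (Ideal.span (fbar '' {j | j < i}) :
          Set (AddMonoidAlgebra K (affSemigroup g)))) →
      a ∈ Ideal.span (H '' (Ideal.span (fbar '' {j | j < i}) :
        Set (AddMonoidAlgebra K (affSemigroup g)))) := by
  classical
  intro i a ha
  set J : Ideal (AddMonoidAlgebra K (affSemigroup g)) := Ideal.span (fbar '' {j | j < i}) with hJdef
  set I : Ideal (AddMonoidAlgebra K (homSemigroup g)) :=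
    Ideal.span (H '' (J : Set (AddMonoidAlgebra K (affSemigroup g)))) with hIdef
  set χ := AddMonoidAlgebra.mapDomainRingHom K χm with hχdef
  have hχmap : ∀ b : AddMonoidAlgebra K (homSemigroup g),
      χ b = AddMonoidAlgebra.mapDomain (⇑χm) b := fun b => rfl
  have hχI : ∀ x ∈ I, χ x ∈ J := by
    intro x hx
    have hle : I ≤ Ideal.comap χ J := by
      apply Ideal.span_le.mpr
      rintro _ ⟨j, hj, rfl⟩
      simpa [Ideal.mem_comap, (hH j).1] using hj
    exact hle hx
  have hHmem : ∀ f, H f ∈ hgrade K g ((affDeg g f : ℤ)) := by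
    intro f
    rw [AddMonoidAlgebra.mem_gradeBy_iff]
    intro x hx
    simpa [hdeg_apply] using (hH f).2 x hx
  have hIhom : Ideal.IsHomogeneous (hgrade K g) I := by
    apply Ideal.homogeneous_span
    rintro _ ⟨j, _, rfl⟩
    exact ⟨_, hHmem j⟩
  -- Lemma A : a homogeneous element whose dehomogenization lies in J lies in I
  have hA : ∀ (d : ℤ) (b : AddMonoidAlgebra K (homSemigroup g)),
      b ∈ hgrade K g d → χ b ∈ J → b ∈ I := by
    intro d b hb hbJ
    by_cases hb0 : b = 0
    · simp [hb0]
    obtain ⟨x, hx⟩ := Finsupp.support_nonempty_iff.mpr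
      (fun h => hb0 (AddMonoidAlgebra.coeff_injective (h.trans rfl)))
    have hxd : hdeg g x = d := (AddMonoidAlgebra.mem_gradeBy_iff _ _ _ b).mp hb hx
    obtain ⟨dn, hdn, -⟩ := homSemigroup_mem_struct g x.2
    have hd : d = (dn : ℤ) := by rw [← hxd, hdeg_apply, hdn]
    have he : affDeg g (χ b) ≤ dn := by
      apply Finset.sup_le
      intro s hs
      rw [hχmap] at hs
      have := Finsupp.mapDomain_support hs
      obtain ⟨y, hy, rfl⟩ := Finset.mem_image.mp this
      have h1 : (deltaA g ((χm y : Fin n → ℤ)) : ℤ) ≤ (y : (Fin n → ℤ) × ℤ).2 := by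
        rw [hχ y]; exact deltaA_le_of_mem g y.2
      have h2 : (y : (Fin n → ℤ) × ℤ).2 = (dn : ℤ) := by
        rw [← hdeg_apply, (AddMonoidAlgebra.mem_gradeBy_iff _ _ _ b).mp hb hy, hd]
      rw [h2] at h1
      exact_mod_cast h1
    have hτ : ((0 : Fin n → ℤ), (1 : ℤ)) ∈ homSemigroup g :=
      AddSubmonoid.subset_closure (Set.mem_insert _ _)
    set τ : homSemigroup g := ⟨_, hτ⟩ with hτdef
    set t : AddMonoidAlgebra K (homSemigroup g) := AddMonoidAlgebra.single τ 1 with htdef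
    have hχτ : χm τ = 0 := by
      apply Subtype.ext
      rw [hχ τ]
      rfl
    have hχt : χ t = 1 := by
      rw [hχmap, htdef, AddMonoidAlgebra.mapDomain_single, hχτ]
      rfl
    have htg : t ∈ hgrade K g 1 := AddMonoidAlgebra.single_mem_gradeBy _ τ 1
    have hbI : t ^ (dn - affDeg g (χ b)) * H (χ b) ∈ I :=
      Ideal.mul_mem_left _ _ (Ideal.subset_span ⟨χ b, hbJ, rfl⟩)
    have hgr : t ^ (dn - affDeg g (χ b)) * H (χ b) ∈ hgrade K g d := by
      have h1 : t ^ (dn - affDeg g (χ b)) ∈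
          hgrade K g (((dn - affDeg g (χ b) : ℕ) : ℤ)) := by
        have := SetLike.pow_mem_graded (dn - affDeg g (χ b)) htg
        simpa using this
      have h2 := SetLike.mul_mem_graded h1 (hHmem (χ b))
      have h3 : ((dn - affDeg g (χ b) : ℕ) : ℤ) + ((affDeg g (χ b) : ℕ) : ℤ) = d := by
        rw [hd]; omega
      rwa [h3] at h2
    have heq := chi_injOn g χm hχ d hgr hb
      (by rw [← hχmap, ← hχmap, map_mul, map_pow, hχt, one_pow, one_mul, (hH (χ b)).1])
    rw [← heq]; exact hbI
  -- decompose a and treat each component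
  have key : ∀ d : ℤ,
      ((DirectSum.decompose (hgrade K g) a d : hgrade K g d) :
        AddMonoidAlgebra K (homSemigroup g)) ∈ I := by
    intro d
    have hd' : ∀ d' : ℤ,
        ((DirectSum.decompose (hgrade K g) a d' : hgrade K g d') :
          AddMonoidAlgebra K (homSemigroup g)) * H (fbar i) ∈
          hgrade K g (d' + (affDeg g (fbar i) : ℤ)) :=
      fun d' => SetLike.mul_mem_graded (DirectSum.decompose (hgrade K g) a d').2
        (hHmem (fbar i))
    have hsum : a * H (fbar i) =
        ∑ d' ∈ DFinsupp.support (DirectSum.decompose (hgrade K g) a),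
          ((DirectSum.decompose (hgrade K g) a d' : hgrade K g d') :
            AddMonoidAlgebra K (homSemigroup g)) * H (fbar i) := by
      conv_lhs => rw [← DirectSum.sum_support_decompose (hgrade K g) a]
      rw [Finset.sum_mul]
    have hdec : ((DirectSum.decompose (hgrade K g) (a * H (fbar i))
          (d + (affDeg g (fbar i) : ℤ)) : _) : AddMonoidAlgebra K (homSemigroup g)) =
        ((DirectSum.decompose (hgrade K g) a d : hgrade K g d) :
          AddMonoidAlgebra K (homSemigroup g)) * H (fbar i) := by
      rw [hsum, DirectSum.decompose_sum, DFinsupp.finset_sum_apply,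
        AddSubmonoidClass.coe_finset_sum]
      refine (Finset.sum_eq_single d ?_ ?_).trans
        (DirectSum.decompose_of_mem_same (hgrade K g) (hd' d))
      · intro b _ hbd
        exact DirectSum.decompose_of_mem_ne (hgrade K g) (hd' b) (by omega)
      · intro hds
        rw [DirectSum.decompose_of_mem_same (hgrade K g) (hd' d),
          DFinsupp.notMem_support_iff.mp hds]
        simp
    have h1 : ((DirectSum.decompose (hgrade K g) a d : hgrade K g d) :
        AddMonoidAlgebra K (homSemigroup g)) * H (fbar i) ∈ I := by
      rw [← hdec]; exact hIhom _ ha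
    have h2 : χ ((DirectSum.decompose (hgrade K g) a d : hgrade K g d) :
        AddMonoidAlgebra K (homSemigroup g)) * fbar i ∈ J := by
      have := hχI _ h1
      rwa [map_mul, (hH (fbar i)).1] at this
    exact hA d _ (DirectSum.decompose (hgrade K g) a d).2 (hreg i _ h2)
  rw [← DirectSum.sum_support_decompose (hgrade K g) a]
  exact Ideal.sum_mem _ fun d _ => key d
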